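/- Let G be a graph with vertices v1, …, vn and let M1, …, Mn, N1, …, Nn be graphs such that, for every i, Mi = ∅ implies Ni = ∅. Then there is a GS derivation from (M1 ⅋ N1) ⊗ ⋯ ⊗ (Mn ⅋ Nn) to G⟨M1, …, Mn⟩ ⅋ Ḡ⟨N1, …, Nn⟩, and dually there is a derivation using only the rules ai↑, ss↑, p↑ from G⟨M1, …, Mn⟩ ⊗ Ḡ⟨N1, …, Nn⟩ to (M1 ⊗ N1) ⅋ ⋯ ⅋ (Mn ⊗ Nn). -/

import Mathlib

namespace GSP

/-- Atoms: a propositional variable (coded by a natural number) with a polarity. -/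
abbrev Atom := ℕ × Bool

/-- The dual atom. -/
def dualAtom (a : Atom) : Atom := (a.1, !a.2)

/-- A finite, simple, undirected graph whose vertices are labelled by atoms. -/
structure LGraph where
  V : Type
  [fintype : Fintype V]
  adj : V → V → Prop
  symm : ∀ {v w : V}, adj v w → adj w v
  irrefl : ∀ v : V, ¬ adj v v
  label : V → Atom

attribute [instance] LGraph.fintype

namespace LGraph

/-- An isomorphism of labelled graphs: a vertex bijection preserving labels and
preserving and reflecting edges. -/
structure Iso (G H : LGraph) where
  toEquiv : G.V ≃ H.V
  adj_iff : ∀ v w : G.V, G.adj v w ↔ H.adj (toEquiv v) (toEquiv w)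
  label_eq : ∀ v : G.V, H.label (toEquiv v) = G.label v

/-- `G ≅ H` : the graphs `G` and `H` are isomorphic. -/
def iso (G H : LGraph) : Prop := Nonempty (Iso G H)

/-- The empty graph. -/
def empty : LGraph where
  V := Empty
  adj _ _ := False
  symm h := h.elim
  irrefl v := v.elim
  label v := v.elim

/-- The single-vertex graph labelled by the atom `a`. -/
def single (a : Atom) : LGraph where
  V := Unit
  adj _ _ := False
  symm h := h.elim
  irrefl _ h := h
  label _ := a

def parAdj (G H : LGraph) : G.V ⊕ H.V → G.V ⊕ H.V → Prop
  | .inl a, .inl b => G.adj a b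
  | .inr a, .inr b => H.adj a b
  | _, _ => False

/-- The par `G ⅋ H` : disjoint union of `G` and `H`. -/
def par (G H : LGraph) : LGraph where
  V := G.V ⊕ H.V
  adj := parAdj G H
  symm := by
    rintro (a | a) (b | b) h
    · exact G.symm h
    · exact h.elim
    · exact h.elim
    · exact H.symm h
  irrefl := by
    rintro (a | a) h
    · exact G.irrefl a h
    · exact H.irrefl a h
  label := Sum.elim G.label H.label

def tensorAdj (G H : LGraph) : G.V ⊕ H.V → G.V ⊕ H.V → Prop
  | .inl a, .inl b => G.adj a b
  | .inr a, .inr b => H.adj a b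
  | .inl _, .inr _ => True
  | .inr _, .inl _ => True

/-- The tensor `G ⊗ H` : join of `G` and `H` (disjoint union plus all edges in between). -/
def tensor (G H : LGraph) : LGraph where
  V := G.V ⊕ H.V
  adj := tensorAdj G H
  symm := by
    rintro (a | a) (b | b) h
    · exact G.symm h
    · exact trivial
    · exact trivial
    · exact H.symm h
  irrefl := by
    rintro (a | a) h
    · exact G.irrefl a h
    · exact H.irrefl a h
  label := Sum.elim G.label H.label

/-- The dual graph `Ḡ` : same vertices, complemented edges, dualized labels. -/
def dual (G : LGraph) : LGraph where
  V := G.V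
  adj v w := v ≠ w ∧ ¬ G.adj v w
  symm h := ⟨fun e => h.1 e.symm, fun h' => h.2 (G.symm h')⟩
  irrefl _ h := h.1 rfl
  label v := dualAtom (G.label v)

def plugAdj (C : LGraph) (R : Set C.V) (X : LGraph) : C.V ⊕ X.V → C.V ⊕ X.V → Prop
  | .inl a, .inl b => C.adj a b
  | .inr a, .inr b => X.adj a b
  | .inl a, .inr _ => a ∈ R
  | .inr _, .inl b => b ∈ R

/-- `C[X]_R` : the graph obtained from the context `C[·]_R` by inserting the graph `X`
as a module whose vertices are adjacent exactly to the vertices in `R`. -/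
def plug (C : LGraph) (R : Set C.V) (X : LGraph) : LGraph where
  V := C.V ⊕ X.V
  adj := plugAdj C R X
  symm := by
    rintro (a | a) (b | b) h
    · exact C.symm h
    · exact h
    · exact h
    · exact X.symm h
  irrefl := by
    rintro (a | a) h
    · exact C.irrefl a h
    · exact X.irrefl a h
  label := Sum.elim C.label X.label

def compAdj (G : LGraph) (H : G.V → LGraph) :
    (Σ v : G.V, (H v).V) → (Σ v : G.V, (H v).V) → Prop := fun x y =>
  (∃ (v : G.V) (a b : (H v).V), x = ⟨v, a⟩ ∧ y = ⟨v, b⟩ ∧ (H v).adj a b) ∨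
    (x.1 ≠ y.1 ∧ G.adj x.1 y.1)

/-- The composition `G⟨H v₁, …, H vₙ⟩` of the family `H` via the graph `G`:
replace each vertex `v` of `G` by the graph `H v`. -/
def comp (G : LGraph) (H : G.V → LGraph) : LGraph where
  V := Σ v : G.V, (H v).V
  adj := compAdj G H
  symm := by
    rintro x y (⟨v, a, b, hx, hy, hab⟩ | ⟨hne, hadj⟩)
    · exact Or.inl ⟨v, b, a, hy, hx, (H v).symm hab⟩
    · exact Or.inr ⟨hne.symm, G.symm hadj⟩
  irrefl := by
    rintro ⟨v, a⟩ (⟨w, x, y, hx, hy, hxy⟩ | ⟨hne, _⟩)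
    · have h := hx.symm.trans hy
      obtain rfl : x = y := by simpa using h
      exact (H w).irrefl x hxy
    · exact hne rfl
  label x := (H x.1).label x.2

/-- A module of `G` : a set `M` of vertices such that every vertex outside `M`
is adjacent either to all vertices of `M` or to none of them. -/
def IsModule (G : LGraph) (M : Set G.V) : Prop :=
  ∀ v ∉ M, ∀ x ∈ M, ∀ y ∈ M, (G.adj v x ↔ G.adj v y)

/-- A prime graph: at least 2 vertices and only trivial modules. -/
def Prime (G : LGraph) : Prop :=
  2 ≤ Fintype.card G.V ∧
    ∀ M : Set G.V, G.IsModule M → M = ∅ ∨ (∃ v, M = {v}) ∨ M = Set.univ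

/-- `G` is `P₄`-free: no four distinct vertices induce a path on 4 vertices. -/
def P4Free (G : LGraph) : Prop :=
  ¬ ∃ v₁ v₂ v₃ v₄ : G.V,
      v₁ ≠ v₂ ∧ v₁ ≠ v₃ ∧ v₁ ≠ v₄ ∧ v₂ ≠ v₃ ∧ v₂ ≠ v₄ ∧ v₃ ≠ v₄ ∧
      G.adj v₁ v₂ ∧ G.adj v₂ v₃ ∧ G.adj v₃ v₄ ∧
      ¬ G.adj v₁ v₃ ∧ ¬ G.adj v₁ v₄ ∧ ¬ G.adj v₂ v₄

end LGraph

open LGraph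

/-- The `n`-fold tensor `X₁ ⊗ ⋯ ⊗ Xₙ`. -/
def bigTensor : (n : ℕ) → (Fin n → LGraph) → LGraph
  | 0, _ => LGraph.empty
  | n + 1, F => (F 0).tensor (bigTensor n fun i => F i.succ)

/-- The `n`-fold par `X₁ ⅋ ⋯ ⅋ Xₙ`. -/
def bigPar : (n : ℕ) → (Fin n → LGraph) → LGraph
  | 0, _ => LGraph.empty
  | n + 1, F => (F 0).par (bigPar n fun i => F i.succ)

/-- The inference rules of system GS (premise, conclusion). -/
inductive GSRule : LGraph → LGraph → Prop
  /-- ai↓ : premise `∅`, conclusion `ā ⅋ a`. -/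
  | ai (a : Atom) : GSRule LGraph.empty ((single (dualAtom a)).par (single a))
  /-- ss↓ : premise `B[A]_S`, conclusion `B ⅋ A`, for `A ≠ ∅` and `S ≠ ∅`. -/
  | ss (A B : LGraph) (S : Set B.V) :
      Nonempty A.V → S ≠ ∅ → GSRule (B.plug S A) (B.par A)
  /-- p↓ : premise `(M₁ ⅋ N₁) ⊗ ⋯ ⊗ (Mₙ ⅋ Nₙ)`, conclusion `P̄⟨M₁,…,Mₙ⟩ ⅋ P⟨N₁,…,Nₙ⟩`,
  for `P` prime with `n = |V(P)| ≥ 4` and all `Mᵢ ≠ ∅`. -/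
  | p (n : ℕ) (P : LGraph) (e : P.V ≃ Fin n) (M N : Fin n → LGraph) :
      P.Prime → 4 ≤ n → (∀ i, Nonempty (M i).V) →
      GSRule (bigTensor n fun i => (M i).par (N i))
        ((P.dual.comp fun v => M (e v)).par (P.comp fun v => N (e v)))

/-- The "up" rules ai↑, ss↑, p↑ (premise, conclusion). -/
inductive UpRule : LGraph → LGraph → Prop
  /-- ai↑ : premise `a ⊗ ā`, conclusion `∅`. -/
  | ai (a : Atom) : UpRule ((single a).tensor (single (dualAtom a))) LGraph.empty
  /-- ss↑ : premise `B ⊗ A`, conclusion `B[A]_S`, for `A ≠ ∅` and `S ≠ V(B)`. -/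
  | ss (A B : LGraph) (S : Set B.V) :
      Nonempty A.V → S ≠ Set.univ → UpRule (B.tensor A) (B.plug S A)
  /-- p↑ : premise `P⟨M₁,…,Mₙ⟩ ⊗ P̄⟨N₁,…,Nₙ⟩`, conclusion `(M₁ ⊗ N₁) ⅋ ⋯ ⅋ (Mₙ ⊗ Nₙ)`,
  for `P` prime with `n = |V(P)| ≥ 4` and all `Mᵢ ≠ ∅`. -/
  | p (n : ℕ) (P : LGraph) (e : P.V ≃ Fin n) (M N : Fin n → LGraph) :
      P.Prime → 4 ≤ n → (∀ i, Nonempty (M i).V) →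
      UpRule ((P.comp fun v => M (e v)).tensor (P.dual.comp fun v => N (e v)))
        (bigPar n fun i => (M i).tensor (N i))

/-- The rules of system SGS : the rules of GS together with their duals. -/
def SGSRule (G H : LGraph) : Prop := GSRule G H ∨ UpRule G H

/-- A single inference step in a system: inside some context, replace a module
isomorphic to the premise of a rule by the corresponding conclusion. -/
def Step (Rules : LGraph → LGraph → Prop) (G H : LGraph) : Prop :=
  ∃ (C : LGraph) (R : Set C.V) (p c : LGraph),
    Rules p c ∧ G.iso (C.plug R p) ∧ H.iso (C.plug R c)

/-- A derivation in a system from `G` to `H` : a finite sequence of inference steps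
and isomorphisms leading from `G` to `H`. -/
def Deriv (Rules : LGraph → LGraph → Prop) (G H : LGraph) : Prop :=
  Relation.ReflTransGen (fun X Y => X.iso Y ∨ Step Rules X Y) G H

/-- A graph is provable in a system if there is a derivation from `∅` to it. -/
def Provable (Rules : LGraph → LGraph → Prop) (G : LGraph) : Prop :=
  Deriv Rules LGraph.empty G

/-- Formulas: unit, positive and negative atoms, par and tensor. -/
inductive Formula where
  | unit : Formula
  | pos (a : ℕ) : Formula
  | neg (a : ℕ) : Formula
  | par (φ ψ : Formula) : Formula
  | tens (φ ψ : Formula) : Formula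

/-- The graph `[φ]` of a formula `φ`. -/
def Formula.graph : Formula → LGraph
  | .unit => LGraph.empty
  | .pos a => single (a, true)
  | .neg a => single (a, false)
  | .par φ ψ => φ.graph.par ψ.graph
  | .tens φ ψ => φ.graph.tensor ψ.graph

/-- Structural equivalence of formulas: the smallest congruence making `⅋` and `⊗`
associative and commutative with unit `∘`. -/
inductive Formula.equiv : Formula → Formula → Prop
  | refl (φ) : Formula.equiv φ φ
  | symm {φ ψ} : Formula.equiv φ ψ → Formula.equiv ψ φ
  | trans {φ ψ χ} : Formula.equiv φ ψ → Formula.equiv ψ χ → Formula.equiv φ χ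
  | parComm (φ ψ) : Formula.equiv (.par φ ψ) (.par ψ φ)
  | parAssoc (φ ψ χ) : Formula.equiv (.par φ (.par ψ χ)) (.par (.par φ ψ) χ)
  | parUnit (φ) : Formula.equiv (.par φ .unit) φ
  | tensComm (φ ψ) : Formula.equiv (.tens φ ψ) (.tens ψ φ)
  | tensAssoc (φ ψ χ) : Formula.equiv (.tens φ (.tens ψ χ)) (.tens (.tens φ ψ) χ)
  | tensUnit (φ) : Formula.equiv (.tens φ .unit) φ
  | parCongr {φ φ' ψ ψ'} : Formula.equiv φ φ' → Formula.equiv ψ ψ' →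
      Formula.equiv (.par φ ψ) (.par φ' ψ')
  | tensCongr {φ φ' ψ ψ'} : Formula.equiv φ φ' → Formula.equiv ψ ψ' →
      Formula.equiv (.tens φ ψ) (.tens φ' ψ')

/-- A formula is unit-free if it contains no occurrence of the unit `∘`. -/
def Formula.UnitFree : Formula → Prop
  | .unit => False
  | .pos _ => True
  | .neg _ => True
  | .par φ ψ => φ.UnitFree ∧ ψ.UnitFree
  | .tens φ ψ => φ.UnitFree ∧ ψ.UnitFree

/-- The sequent calculus MLL° (multiplicative linear logic with mix) on multisets
of formulas. -/
inductive MLL : Multiset Formula → Prop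
  | ax (a : ℕ) : MLL {Formula.pos a, Formula.neg a}
  | tens {Γ Δ : Multiset Formula} (φ ψ : Formula) :
      MLL (φ ::ₘ Γ) → MLL (ψ ::ₘ Δ) → MLL (Formula.tens φ ψ ::ₘ (Γ + Δ))
  | par {Γ : Multiset Formula} (φ ψ : Formula) :
      MLL (φ ::ₘ ψ ::ₘ Γ) → MLL (Formula.par φ ψ ::ₘ Γ)
  | mix {Γ Δ : Multiset Formula} : MLL Γ → MLL Δ → MLL (Γ + Δ)

namespace LGraph

attribute [reducible] par tensor plug dual comp

def Iso.refl (G : LGraph) : Iso G G := ⟨Equiv.refl _, fun _ _ => Iff.rfl, fun _ => rfl⟩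
def Iso.symm {G H : LGraph} (i : Iso G H) : Iso H G where
  toEquiv := i.toEquiv.symm
  adj_iff v w := by rw [i.adj_iff (i.toEquiv.symm v) (i.toEquiv.symm w)]; simp
  label_eq v := by have := i.label_eq (i.toEquiv.symm v); simpa using this.symm
def Iso.trans {G H K : LGraph} (i : Iso G H) (j : Iso H K) : Iso G K where
  toEquiv := i.toEquiv.trans j.toEquiv
  adj_iff v w := by rw [i.adj_iff, j.adj_iff]; rfl
  label_eq v := by
    have h1 := j.label_eq (i.toEquiv v); have h2 := i.label_eq v
    simpa [Equiv.trans] using h1.trans h2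
lemma iso_refl (G : LGraph) : iso G G := ⟨Iso.refl G⟩
lemma iso.symm {G H : LGraph} (h : iso G H) : iso H G := h.elim fun i => ⟨i.symm⟩
lemma iso.trans {G H K : LGraph} (h : iso G H) (h' : iso H K) : iso G K :=
  h.elim fun i => h'.elim fun j => ⟨i.trans j⟩
lemma iso_of_isEmpty {G H : LGraph} (hG : IsEmpty G.V) (hH : IsEmpty H.V) : iso G H :=
  ⟨⟨Equiv.equivOfIsEmpty _ _, fun v => hG.elim v, fun v => hG.elim v⟩⟩
instance : IsEmpty (empty.V) := by unfold empty; infer_instance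
lemma iso_empty {G : LGraph} (hG : IsEmpty G.V) : iso G empty :=
  iso_of_isEmpty hG inferInstance

def parCongr {A A' B B' : LGraph} (i : Iso A A') (j : Iso B B') : Iso (par A B) (par A' B') where
  toEquiv := Equiv.sumCongr i.toEquiv j.toEquiv
  adj_iff v w := by
    rcases v with a | b <;> rcases w with a' | b' <;>
      simp [par, parAdj, i.adj_iff, j.adj_iff]
  label_eq v := by rcases v with a | b <;> simp [par, i.label_eq, j.label_eq]

def tensorCongr {A A' B B' : LGraph} (i : Iso A A') (j : Iso B B') :
    Iso (tensor A B) (tensor A' B') where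
  toEquiv := Equiv.sumCongr i.toEquiv j.toEquiv
  adj_iff v w := by
    rcases v with a | b <;> rcases w with a' | b' <;>
      simp [tensor, tensorAdj, i.adj_iff, j.adj_iff]
  label_eq v := by rcases v with a | b <;> simp [tensor, i.label_eq, j.label_eq]

def plugCongr {C C' X X' : LGraph} {R : Set C.V} {R' : Set C'.V}
    (i : Iso C C') (j : Iso X X') (hR : ∀ c, c ∈ R ↔ i.toEquiv c ∈ R') :
    Iso (plug C R X) (plug C' R' X') where
  toEquiv := Equiv.sumCongr i.toEquiv j.toEquiv
  adj_iff v w := by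
    rcases v with a | b <;> rcases w with a' | b' <;>
      simp [plug, plugAdj, i.adj_iff, j.adj_iff, hR]
  label_eq v := by rcases v with a | b <;> simp [plug, i.label_eq, j.label_eq]

def plugCongrRight {C X X' : LGraph} (R : Set C.V) (j : Iso X X') :
    Iso (plug C R X) (plug C R X') :=
  plugCongr (Iso.refl C) j (fun _ => Iff.rfl)

lemma iso_par {A A' B B'} (h : iso A A') (h' : iso B B') : iso (par A B) (par A' B') :=
  h.elim fun i => h'.elim fun j => ⟨parCongr i j⟩
lemma iso_tensor {A A' B B'} (h : iso A A') (h' : iso B B') : iso (tensor A B) (tensor A' B') :=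
  h.elim fun i => h'.elim fun j => ⟨tensorCongr i j⟩
lemma iso_plug_right {C X X'} (R : Set C.V) (h : iso X X') : iso (plug C R X) (plug C R X') :=
  h.elim fun j => ⟨plugCongrRight R j⟩

def parComm (A B : LGraph) : Iso (par A B) (par B A) where
  toEquiv := Equiv.sumComm _ _
  adj_iff v w := by rcases v with a | b <;> rcases w with a' | b' <;> simp [par, parAdj]
  label_eq v := by rcases v with a | b <;> simp [par]
def tensorComm (A B : LGraph) : Iso (tensor A B) (tensor B A) where
  toEquiv := Equiv.sumComm _ _
  adj_iff v w := by rcases v with a | b <;> rcases w with a' | b' <;> simp [tensor, tensorAdj]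
  label_eq v := by rcases v with a | b <;> simp [tensor]
def parAssoc (A B C : LGraph) : Iso (par (par A B) C) (par A (par B C)) where
  toEquiv := Equiv.sumAssoc _ _ _
  adj_iff v w := by
    rcases v with (a | b) | c <;> rcases w with (a' | b') | c' <;>
      simp [par, parAdj]
  label_eq v := by rcases v with (a | b) | c <;> simp [par]
def tensorAssoc (A B C : LGraph) : Iso (tensor (tensor A B) C) (tensor A (tensor B C)) where
  toEquiv := Equiv.sumAssoc _ _ _
  adj_iff v w := by
    rcases v with (a | b) | c <;> rcases w with (a' | b') | c' <;>
      simp [tensor, tensorAdj]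
  label_eq v := by rcases v with (a | b) | c <;> simp [tensor]

/-- drop an empty right summand of a par -/
def parEmpty (A B : LGraph) (hB : IsEmpty B.V) : Iso (par A B) A where
  toEquiv := (Equiv.sumCongr (Equiv.refl A.V) (Equiv.equivEmpty B.V)).trans (Equiv.sumEmpty _ _)
  adj_iff v w := by
    rcases v with a | b
    · rcases w with a' | b'
      · simp [par, parAdj]
      · exact hB.elim b'
    · exact hB.elim b
  label_eq v := by
    rcases v with a | b
    · simp [par]
    · exact hB.elim b
def tensorEmpty (A B : LGraph) (hB : IsEmpty B.V) : Iso (tensor A B) A where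
  toEquiv := (Equiv.sumCongr (Equiv.refl A.V) (Equiv.equivEmpty B.V)).trans (Equiv.sumEmpty _ _)
  adj_iff v w := by
    rcases v with a | b
    · rcases w with a' | b'
      · simp [tensor, tensorAdj]
      · exact hB.elim b'
    · exact hB.elim b
  label_eq v := by
    rcases v with a | b
    · simp [tensor]
    · exact hB.elim b

def plugEmptySet (C X : LGraph) : Iso (plug C (∅ : Set C.V) X) (par C X) where
  toEquiv := Equiv.refl _
  adj_iff v w := by
    rcases v with a | b <;> rcases w with a' | b' <;>
      simp [plug, plugAdj, par, parAdj]
  label_eq v := by rcases v with a | b <;> simp [plug, par]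
def plugUnivSet (C X : LGraph) : Iso (plug C (Set.univ : Set C.V) X) (tensor C X) where
  toEquiv := Equiv.refl _
  adj_iff v w := by
    rcases v with a | b <;> rcases w with a' | b' <;>
      simp [plug, plugAdj, tensor, tensorAdj]
  label_eq v := by rcases v with a | b <;> simp [plug, tensor]
def plugEmptyContext (C X : LGraph) (hC : IsEmpty C.V) (R : Set C.V) : Iso (plug C R X) X where
  toEquiv := (Equiv.sumCongr (Equiv.equivEmpty C.V) (Equiv.refl X.V)).trans
    ((Equiv.sumComm _ _).trans (Equiv.sumEmpty _ _))
  adj_iff v w := by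
    rcases v with a | b
    · exact hC.elim a
    · rcases w with a' | b'
      · exact hC.elim a'
      · simp [plug, plugAdj]
  label_eq v := by
    rcases v with a | b
    · exact hC.elim a
    · simp [plug]

/-- the key associativity of plugging: plugging into a plugged module. -/
def plugAssoc (C C' Y : LGraph) (S : Set C.V) (R' : Set C'.V) :
    Iso (plug C S (plug C' R' Y))
      (plug (plug C S C') {z | Sum.elim (· ∈ S) (· ∈ R') z} Y) where
  toEquiv := (Equiv.sumAssoc _ _ _).symm
  adj_iff v w := by
    rcases v with a | (b | c) <;> rcases w with a' | (b' | c') <;>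
      simp [plug, plugAdj]
  label_eq v := by rcases v with a | (b | c) <;> simp [plug]


section DualIso

def dualCongr {G H : LGraph} (i : Iso G H) : Iso (dual G) (dual H) where
  toEquiv := i.toEquiv
  adj_iff v w := by
    simp only [dual, i.adj_iff]
    constructor
    · rintro ⟨h1, h2⟩; exact ⟨fun h => h1 (i.toEquiv.injective h), h2⟩
    · rintro ⟨h1, h2⟩; exact ⟨fun h => h1 (congrArg _ h), h2⟩
  label_eq v := by simp [dual, i.label_eq]

lemma iso_dual {G H : LGraph} (h : iso G H) : iso (dual G) (dual H) :=
  h.elim fun i => ⟨dualCongr i⟩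

def dualDual (G : LGraph) : Iso (dual (dual G)) G where
  toEquiv := Equiv.refl _
  adj_iff v w := by
    simp only [dual, Equiv.refl_apply]
    constructor
    · rintro ⟨h1, h2⟩
      by_contra hadj
      exact h2 ⟨h1, hadj⟩
    · intro h
      have hne : v ≠ w := by rintro rfl; exact G.irrefl v h
      exact ⟨hne, fun h' => h'.2 h⟩
  label_eq v := by simp [dual, dualAtom]

def dualPar (A B : LGraph) : Iso (dual (par A B)) (tensor (dual A) (dual B)) where
  toEquiv := Equiv.refl _
  adj_iff v w := by
    rcases v with a | b <;> rcases w with a' | b' <;>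
      simp [dual, par, parAdj, tensor, tensorAdj]
  label_eq v := by rcases v with a | b <;> simp [dual, par, tensor]

def dualTensor (A B : LGraph) : Iso (dual (tensor A B)) (par (dual A) (dual B)) where
  toEquiv := Equiv.refl _
  adj_iff v w := by
    rcases v with a | b <;> rcases w with a' | b' <;>
      simp [dual, par, parAdj, tensor, tensorAdj]
  label_eq v := by rcases v with a | b <;> simp [dual, par, tensor]

def dualPlug (C X : LGraph) (R : Set C.V) :
    Iso (dual (plug C R X)) (plug (dual C) Rᶜ (dual X)) where
  toEquiv := Equiv.refl _
  adj_iff v w := by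
    rcases v with a | b <;> rcases w with a' | b' <;>
      simp [dual, plug, plugAdj]
  label_eq v := by rcases v with a | b <;> simp [dual, plug]

def dualSingle (a : Atom) : Iso (dual (single a)) (single (dualAtom a)) where
  toEquiv := Equiv.refl _
  adj_iff v w := by
    have : v = w := rfl
    subst this
    exact ⟨fun h => (h.1 rfl).elim, fun h => h.elim⟩
  label_eq v := by simp [dual, single]

def dualEmpty : Iso (dual empty) empty where
  toEquiv := Equiv.refl _
  adj_iff v _ := v.elim
  label_eq v := v.elim

end DualIso

section CompHelpers

lemma compAdj_mk_same {G : LGraph} {H : G.V → LGraph} {v : G.V} {a b : (H v).V} :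
    compAdj G H ⟨v, a⟩ ⟨v, b⟩ ↔ (H v).adj a b := by
  constructor
  · rintro (⟨u, x, y, hx, hy, hxy⟩ | ⟨hne, _⟩)
    · obtain ⟨rfl, hax⟩ := Sigma.mk.inj_iff.mp hx
      obtain ⟨-, hby⟩ := Sigma.mk.inj_iff.mp hy
      obtain rfl := eq_of_heq hax
      obtain rfl := eq_of_heq hby
      exact hxy
    · exact absurd rfl hne
  · intro h; exact Or.inl ⟨v, a, b, rfl, rfl, h⟩

lemma compAdj_mk_ne {G : LGraph} {H : G.V → LGraph} {v w : G.V} {a : (H v).V} {b : (H w).V}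
    (hne : v ≠ w) : compAdj G H ⟨v, a⟩ ⟨w, b⟩ ↔ G.adj v w := by
  constructor
  · rintro (⟨u, x, y, hx, hy, hxy⟩ | ⟨-, h⟩)
    · obtain ⟨rfl, -⟩ := Sigma.mk.inj_iff.mp hx
      obtain ⟨rfl, -⟩ := Sigma.mk.inj_iff.mp hy
      exact absurd rfl hne
    · exact h
  · intro h; exact Or.inr ⟨hne, h⟩

def compCongr {G G' : LGraph} {H : G.V → LGraph} {H' : G'.V → LGraph}
    (i : Iso G G') (F : ∀ v : G.V, Iso (H v) (H' (i.toEquiv v))) :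
    Iso (comp G H) (comp G' H') where
  toEquiv := Equiv.sigmaCongr i.toEquiv (fun v => (F v).toEquiv)
  adj_iff := by
    rintro ⟨v, a⟩ ⟨w, b⟩
    show compAdj G H _ _ ↔ compAdj G' H' ⟨i.toEquiv v, (F v).toEquiv a⟩ ⟨i.toEquiv w, (F w).toEquiv b⟩
    by_cases hvw : v = w
    · subst hvw
      rw [compAdj_mk_same, compAdj_mk_same, (F v).adj_iff]
    · rw [compAdj_mk_ne hvw, compAdj_mk_ne (fun h => hvw (i.toEquiv.injective h)), i.adj_iff]
  label_eq := by
    rintro ⟨v, a⟩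
    show (H' (i.toEquiv v)).label ((F v).toEquiv a) = (H v).label a
    exact (F v).label_eq a

lemma iso_comp {G G' : LGraph} {H : G.V → LGraph} {H' : G'.V → LGraph}
    (i : Iso G G') (F : ∀ v : G.V, iso (H v) (H' (i.toEquiv v))) :
    iso (comp G H) (comp G' H') :=
  ⟨compCongr i (fun v => Classical.choice (F v))⟩

lemma iso_comp_family {G : LGraph} {H H' : G.V → LGraph}
    (F : ∀ v : G.V, iso (H v) (H' v)) : iso (comp G H) (comp G H') :=
  iso_comp (Iso.refl G) F

def dualComp (G : LGraph) (H : G.V → LGraph) :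
    Iso (dual (comp G H)) (comp (dual G) (fun v => dual (H v))) where
  toEquiv := Equiv.refl _
  adj_iff := by
    rintro ⟨v, a⟩ ⟨w, b⟩
    show (⟨v,a⟩ : Σ v, (H v).V) ≠ ⟨w, b⟩ ∧ ¬ compAdj G H ⟨v,a⟩ ⟨w,b⟩ ↔
      compAdj (dual G) (fun v => dual (H v)) ⟨v, a⟩ ⟨w, b⟩
    by_cases hvw : v = w
    · subst hvw
      rw [compAdj_mk_same (G := dual G) (H := fun v => dual (H v)), compAdj_mk_same]
      show _ ↔ a ≠ b ∧ ¬ (H v).adj a b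
      constructor
      · rintro ⟨h1, h2⟩
        exact ⟨fun hab => h1 (by rw [hab]), h2⟩
      · rintro ⟨h1, h2⟩
        refine ⟨fun hab => ?_, h2⟩
        obtain ⟨-, h⟩ := Sigma.mk.inj_iff.mp hab
        exact h1 (eq_of_heq h)
    · rw [compAdj_mk_ne (G := dual G) (H := fun v => dual (H v)) hvw, compAdj_mk_ne hvw]
      show _ ↔ v ≠ w ∧ ¬ G.adj v w
      constructor
      · rintro ⟨-, h2⟩; exact ⟨hvw, h2⟩
      · rintro ⟨-, h2⟩
        exact ⟨fun hab => hvw (congrArg Sigma.fst hab), h2⟩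
  label_eq := by rintro ⟨v, a⟩; rfl

def compUnique (G : LGraph) (H : G.V → LGraph) (v₀ : G.V) (hall : ∀ w, w = v₀) :
    Iso (comp G H) (H v₀) where
  toEquiv :=
    { toFun := fun x => (hall x.1) ▸ x.2
      invFun := fun a => ⟨v₀, a⟩
      left_inv := by
        rintro ⟨w, a⟩
        obtain rfl := hall w
        rfl
      right_inv := by intro a; rfl }
  adj_iff := by
    rintro ⟨v, a⟩ ⟨w, b⟩
    obtain rfl := hall v
    obtain rfl := hall w
    show compAdj G H _ _ ↔ _
    rw [compAdj_mk_same]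
    rfl
  label_eq := by
    rintro ⟨v, a⟩
    obtain rfl := hall v
    rfl

end CompHelpers


section Induce

/-- induced subgraph on a predicate -/
def induce (G : LGraph) (p : G.V → Prop) [DecidablePred p] : LGraph where
  V := Subtype p
  adj x y := G.adj x.val y.val
  symm h := G.symm h
  irrefl x := G.irrefl x.val
  label x := G.label x.val

attribute [reducible] induce

def dualInduce (G : LGraph) (p : G.V → Prop) [DecidablePred p] :
    Iso (dual (induce G p)) (induce (dual G) p) where
  toEquiv := Equiv.refl _
  adj_iff v w := by
    show (v ≠ w ∧ ¬ G.adj v.val w.val) ↔ (v.val ≠ w.val ∧ ¬ G.adj v.val w.val)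
    constructor
    · rintro ⟨h1, h2⟩; exact ⟨fun h => h1 (Subtype.ext h), h2⟩
    · rintro ⟨h1, h2⟩; exact ⟨fun h => h1 (congrArg Subtype.val h), h2⟩
  label_eq v := rfl

end Induce


end LGraph


----------------------------------------------------------------
-- Quotient commutative monoid of iso classes
----------------------------------------------------------------

instance isoSetoid : Setoid LGraph where
  r := iso
  iseqv := ⟨iso_refl, iso.symm, iso.trans⟩

def IsoCl := Quotient isoSetoid

def IsoCl.mk (G : LGraph) : IsoCl := Quotient.mk isoSetoid G

notation "⟦" G "⟧ᵢ" => IsoCl.mk G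

lemma IsoCl.eq_iff {G H : LGraph} : ⟦G⟧ᵢ = ⟦H⟧ᵢ ↔ iso G H := by
  constructor
  · exact fun h => Quotient.exact h
  · exact fun h => Quotient.sound h

instance : CommMonoid IsoCl where
  mul := Quotient.map₂ tensor (fun _ _ h _ _ h' => iso_tensor h h')
  one := ⟦LGraph.empty⟧ᵢ
  mul_assoc := by
    intro a b c
    induction a using Quotient.inductionOn
    induction b using Quotient.inductionOn
    induction c using Quotient.inductionOn
    exact Quotient.sound ⟨tensorAssoc _ _ _⟩
  one_mul := by
    intro a
    induction a using Quotient.inductionOn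
    exact Quotient.sound (iso.trans ⟨tensorComm _ _⟩ ⟨tensorEmpty _ _ inferInstance⟩)
  mul_one := by
    intro a
    induction a using Quotient.inductionOn
    exact Quotient.sound ⟨tensorEmpty _ _ inferInstance⟩
  mul_comm := by
    intro a b
    induction a using Quotient.inductionOn
    induction b using Quotient.inductionOn
    exact Quotient.sound ⟨tensorComm _ _⟩

lemma IsoCl.mk_tensor (G H : LGraph) : ⟦G.tensor H⟧ᵢ = ⟦G⟧ᵢ * ⟦H⟧ᵢ := rfl

lemma IsoCl.mk_bigTensor (n : ℕ) (F : Fin n → LGraph) :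
    ⟦bigTensor n F⟧ᵢ = ∏ i, ⟦F i⟧ᵢ := by
  induction n with
  | zero => simp [bigTensor]; rfl
  | succ n ih =>
    rw [Fin.prod_univ_succ]
    show ⟦(F 0).tensor (bigTensor n fun i => F i.succ)⟧ᵢ = _
    rw [IsoCl.mk_tensor, ih]

----------------------------------------------------------------
-- bigPar lemmas
----------------------------------------------------------------

lemma iso_bigPar {n : ℕ} {F F' : Fin n → LGraph} (h : ∀ i, iso (F i) (F' i)) :
    iso (bigPar n F) (bigPar n F') := by
  induction n with
  | zero => exact iso_refl _
  | succ n ih =>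
    exact iso_par (h 0) (ih (fun i => h i.succ))

lemma dual_bigTensor (n : ℕ) (F : Fin n → LGraph) :
    iso (dual (bigTensor n F)) (bigPar n (fun i => dual (F i))) := by
  induction n with
  | zero => exact ⟨dualEmpty⟩
  | succ n ih =>
    exact iso.trans ⟨dualTensor _ _⟩ (iso_par (iso_refl _) (ih _))

----------------------------------------------------------------
-- Deriv machinery
----------------------------------------------------------------

namespace Deriv

variable {Rules : LGraph → LGraph → Prop}

lemma refl (G : LGraph) : Deriv Rules G G := Relation.ReflTransGen.refl

lemma trans {G H K : LGraph} (h : Deriv Rules G H) (h' : Deriv Rules H K) :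
    Deriv Rules G K := Relation.ReflTransGen.trans h h'

lemma of_iso {G H : LGraph} (h : iso G H) : Deriv Rules G H :=
  Relation.ReflTransGen.single (Or.inl h)

lemma of_step {G H : LGraph} (h : Step Rules G H) : Deriv Rules G H :=
  Relation.ReflTransGen.single (Or.inr h)

end Deriv

lemma step_of_rule {Rules : LGraph → LGraph → Prop} {p c X Y : LGraph}
    (hr : Rules p c) (hX : iso X p) (hY : iso Y c) : Step Rules X Y := by
  refine ⟨LGraph.empty, ∅, p, c, hr, ?_, ?_⟩
  · exact hX.trans (iso.symm ⟨plugEmptyContext _ _ inferInstance _⟩)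
  · exact hY.trans (iso.symm ⟨plugEmptyContext _ _ inferInstance _⟩)

lemma deriv_of_rule {Rules : LGraph → LGraph → Prop} {p c X Y : LGraph}
    (hr : Rules p c) (hX : iso X p) (hY : iso Y c) : Deriv Rules X Y :=
  Deriv.of_step (step_of_rule hr hX hY)

/-- a step can be performed inside a plug context -/
lemma Step.plug {Rules : LGraph → LGraph → Prop} {p q : LGraph}
    (C : LGraph) (S : Set C.V) (h : Step Rules p q) :
    Step Rules (C.plug S p) (C.plug S q) := by
  obtain ⟨C', R', pr, c, hrule, hp, hq⟩ := h
  refine ⟨C.plug S C', {z | Sum.elim (· ∈ S) (· ∈ R') z}, pr, c, hrule, ?_, ?_⟩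
  · exact (iso_plug_right S hp).trans ⟨plugAssoc C C' pr S R'⟩
  · exact (iso_plug_right S hq).trans ⟨plugAssoc C C' c S R'⟩

lemma Deriv.plug {Rules : LGraph → LGraph → Prop} {p q : LGraph}
    (C : LGraph) (S : Set C.V) (h : Deriv Rules p q) :
    Deriv Rules (C.plug S p) (C.plug S q) := by
  induction h with
  | refl => exact Deriv.refl _
  | tail _ hstep ih =>
    refine ih.trans ?_
    rcases hstep with hiso | hstep
    · exact Deriv.of_iso (iso_plug_right S hiso)
    · exact Deriv.of_step (hstep.plug C S)

/-- derivation in the right argument of a tensor -/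
lemma Deriv.tensor_right {Rules : LGraph → LGraph → Prop} {p q : LGraph}
    (A : LGraph) (h : Deriv Rules p q) : Deriv Rules (A.tensor p) (A.tensor q) := by
  have := h.plug A Set.univ
  exact (Deriv.of_iso (iso.symm ⟨plugUnivSet A p⟩)).trans
    (this.trans (Deriv.of_iso ⟨plugUnivSet A q⟩))

lemma Deriv.par_right {Rules : LGraph → LGraph → Prop} {p q : LGraph}
    (A : LGraph) (h : Deriv Rules p q) : Deriv Rules (A.par p) (A.par q) := by
  have := h.plug A ∅
  exact (Deriv.of_iso (iso.symm ⟨plugEmptySet A p⟩)).trans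
    (this.trans (Deriv.of_iso ⟨plugEmptySet A q⟩))

----------------------------------------------------------------
-- Dualization of derivations
----------------------------------------------------------------

lemma dualAtom_dualAtom (a : Atom) : dualAtom (dualAtom a) = a := by
  simp [dualAtom]

lemma rule_dual {p c : LGraph} (h : GSRule p c) :
    ∃ p' c', UpRule p' c' ∧ iso (dual c) p' ∧ iso (dual p) c' := by
  cases h with
  | ai a =>
    refine ⟨_, _, UpRule.ai a, ?_, ⟨dualEmpty⟩⟩
    refine iso.trans ⟨dualPar _ _⟩ (iso_tensor ?_ ⟨dualSingle a⟩)
    exact iso.trans ⟨dualSingle (dualAtom a)⟩ (by rw [dualAtom_dualAtom]; exact iso_refl _)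
  | ss A B S hA hS =>
    refine ⟨_, _, UpRule.ss (dual A) (dual B) Sᶜ hA ?_, ⟨dualPar _ _⟩, ⟨dualPlug _ _ _⟩⟩
    intro h
    exact hS (by simpa [Set.compl_univ_iff] using h)
  | p n P e M N hP h4 hM =>
    refine ⟨_, _, UpRule.p n P e (fun i => dual (M i)) (fun i => dual (N i)) hP h4
      (fun i => hM i), ?_, ?_⟩
    · refine iso.trans ⟨dualPar _ _⟩ (iso_tensor ?_ ⟨dualComp _ _⟩)
      refine iso.trans ⟨dualComp _ _⟩ ?_
      exact iso_comp (dualDual P) (fun v => iso_refl _)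
    · refine iso.trans (dual_bigTensor _ _) (iso_bigPar (fun i => ⟨dualPar _ _⟩))

lemma step_dual {X Y : LGraph} (h : Step GSRule X Y) : Step UpRule (dual Y) (dual X) := by
  obtain ⟨C, R, p, c, hrule, hX, hY⟩ := h
  obtain ⟨p', c', hrule', hc, hp⟩ := rule_dual hrule
  refine ⟨dual C, Rᶜ, p', c', hrule', ?_, ?_⟩
  · exact (iso_dual hY).trans ((iso.trans ⟨dualPlug _ _ _⟩ (iso_plug_right _ hc)))
  · exact (iso_dual hX).trans ((iso.trans ⟨dualPlug _ _ _⟩ (iso_plug_right _ hp)))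

lemma deriv_dual {A B : LGraph} (h : Deriv GSRule A B) : Deriv UpRule (dual B) (dual A) := by
  induction h with
  | refl => exact Deriv.refl _
  | tail _ hrel ih =>
    refine Relation.ReflTransGen.head ?_ ih
    rcases hrel with hiso | hstep
    · exact Or.inl (iso_dual hiso.symm)
    · exact Or.inr (step_dual hstep)



----------------------------------------------------------------
-- Two-block derivations (binary tensor / par cases)
----------------------------------------------------------------

section TwoBlock

open LGraph

variable (M1 N1 M2 N2 : LGraph)

private def shuffle1 : Iso ((M1.par N1).tensor (M2.par N2))
    (((M1.par N1).tensor M2).plug {z | z.isLeft} N2) where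
  toEquiv :=
    { toFun := fun z => match z with
        | .inl a => .inl (.inl a)
        | .inr (.inl m) => .inl (.inr m)
        | .inr (.inr n) => .inr n
      invFun := fun z => match z with
        | .inl (.inl a) => .inl a
        | .inl (.inr m) => .inr (.inl m)
        | .inr n => .inr (.inr n)
      left_inv := by rintro (a | (m | n)) <;> rfl
      right_inv := by rintro ((a | m) | n) <;> rfl }
  adj_iff v w := by
    rcases v with a | (m | n) <;> rcases w with a' | (m' | n') <;>
      simp [tensor, tensorAdj, par, parAdj, plug, plugAdj]
  label_eq v := by rcases v with a | (m | n) <;> rfl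

private def shuffle2 : Iso ((M1.par N1).tensor M2)
    ((M1.tensor M2).plug {z | z.isRight} N1) where
  toEquiv :=
    { toFun := fun z => match z with
        | .inl (.inl m) => .inl (.inl m)
        | .inl (.inr n) => .inr n
        | .inr m2 => .inl (.inr m2)
      invFun := fun z => match z with
        | .inl (.inl m) => .inl (.inl m)
        | .inr n => .inl (.inr n)
        | .inl (.inr m2) => .inr m2
      left_inv := by rintro ((m | n) | m2) <;> rfl
      right_inv := by rintro ((m | m2) | n) <;> rfl }
  adj_iff v w := by
    rcases v with (m | n) | m2 <;> rcases w with (m' | n') | m2' <;>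
      simp [tensor, tensorAdj, par, parAdj, plug, plugAdj]
  label_eq v := by rcases v with (m | n) | m2 <;> rfl

private def shuffle3 : Iso ((M1.par N1).tensor (M2.par N2))
    ((N1.tensor (M2.par N2)).plug {z | z.isRight} M1) where
  toEquiv :=
    { toFun := fun z => match z with
        | .inl (.inl m) => .inr m
        | .inl (.inr n) => .inl (.inl n)
        | .inr x => .inl (.inr x)
      invFun := fun z => match z with
        | .inr m => .inl (.inl m)
        | .inl (.inl n) => .inl (.inr n)
        | .inl (.inr x) => .inr x
      left_inv := by rintro ((m | n) | x) <;> rfl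
      right_inv := by rintro ((n | x) | m) <;> rfl }
  adj_iff v w := by
    rcases v with (m | n) | x <;> rcases w with (m' | n') | x' <;>
      simp [tensor, tensorAdj, par, parAdj, plug, plugAdj]
  label_eq v := by rcases v with (m | n) | x <;> rfl

private def shuffle4 : Iso (N1.tensor (M2.par N2))
    ((N1.tensor N2).plug {z | z.isLeft} M2) where
  toEquiv :=
    { toFun := fun z => match z with
        | .inl n1 => .inl (.inl n1)
        | .inr (.inl m2) => .inr m2
        | .inr (.inr n2) => .inl (.inr n2)
      invFun := fun z => match z with
        | .inl (.inl n1) => .inl n1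
        | .inr m2 => .inr (.inl m2)
        | .inl (.inr n2) => .inr (.inr n2)
      left_inv := by rintro (n1 | (m2 | n2)) <;> rfl
      right_inv := by rintro ((n1 | n2) | m2) <;> rfl }
  adj_iff v w := by
    rcases v with n1 | (m2 | n2) <;> rcases w with n1' | (m2' | n2') <;>
      simp [tensor, tensorAdj, par, parAdj, plug, plugAdj]
  label_eq v := by rcases v with n1 | (m2 | n2) <;> rfl

variable {M1 N1 M2 N2}

lemma isLeft_ne_empty {α β : Type} [ne : Nonempty α] :
    ({z | z.isLeft} : Set (α ⊕ β)) ≠ ∅ := by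
  obtain ⟨a⟩ := ne
  intro h
  have : (Sum.inl a : α ⊕ β) ∈ ({z | z.isLeft} : Set (α ⊕ β)) := by simp [Sum.isLeft]
  rw [h] at this
  exact this

lemma isRight_ne_empty {α β : Type} [ne : Nonempty β] :
    ({z | z.isRight} : Set (α ⊕ β)) ≠ ∅ := by
  obtain ⟨b⟩ := ne
  intro h
  have : (Sum.inr b : α ⊕ β) ∈ ({z | z.isRight} : Set (α ⊕ β)) := by simp [Sum.isRight]
  rw [h] at this
  exact this

/-- binary tensor case of the main lemma -/
lemma two_tensor (hM1 : Nonempty M1.V) (hM2 : Nonempty M2.V) :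
    Deriv GSRule ((M1.par N1).tensor (M2.par N2)) ((M1.tensor M2).par (N1.par N2)) := by
  have step1 : Deriv GSRule ((M1.par N1).tensor (M2.par N2))
      (((M1.par N1).tensor M2).par N2) := by
    by_cases hN2 : Nonempty N2.V
    · refine deriv_of_rule (GSRule.ss N2 ((M1.par N1).tensor M2) {z | z.isLeft} hN2 ?_)
        ⟨shuffle1 M1 N1 M2 N2⟩ (iso_refl _)
      have : Nonempty (M1.par N1).V := ⟨Sum.inl hM1.some⟩
      exact isLeft_ne_empty
    · have h2 : IsEmpty N2.V := not_nonempty_iff.mp hN2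
      refine Deriv.of_iso ?_
      refine iso.trans (iso_tensor (iso_refl _) ⟨parEmpty _ _ h2⟩) ?_
      exact iso.symm ⟨parEmpty _ _ h2⟩
  have step2 : Deriv GSRule ((M1.par N1).tensor M2) ((M1.tensor M2).par N1) := by
    by_cases hN1 : Nonempty N1.V
    · refine deriv_of_rule (GSRule.ss N1 (M1.tensor M2) {z | z.isRight} hN1 ?_)
        ⟨shuffle2 M1 N1 M2⟩ (iso_refl _)
      exact isRight_ne_empty
    · have h1 : IsEmpty N1.V := not_nonempty_iff.mp hN1
      refine Deriv.of_iso ?_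
      refine iso.trans (iso_tensor ⟨parEmpty _ _ h1⟩ (iso_refl _)) ?_
      exact iso.symm ⟨parEmpty _ _ h1⟩
  refine step1.trans ?_
  have flip : Deriv GSRule (N2.par ((M1.par N1).tensor M2)) (N2.par ((M1.tensor M2).par N1)) :=
    Deriv.par_right N2 step2
  refine (Deriv.of_iso ⟨parComm _ _⟩).trans (flip.trans (Deriv.of_iso ?_))
  refine iso.trans ⟨parComm _ _⟩ ⟨parAssoc _ _ _⟩

/-- binary par case of the main lemma -/
lemma two_par (hM1 : Nonempty M1.V) (hM2 : Nonempty M2.V) :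
    Deriv GSRule ((M1.par N1).tensor (M2.par N2)) ((M1.par M2).par (N1.tensor N2)) := by
  have step1 : Deriv GSRule ((M1.par N1).tensor (M2.par N2))
      ((N1.tensor (M2.par N2)).par M1) := by
    refine deriv_of_rule (GSRule.ss M1 (N1.tensor (M2.par N2)) {z | z.isRight} hM1 ?_)
      ⟨shuffle3 M1 N1 M2 N2⟩ (iso_refl _)
    have : Nonempty (M2.par N2).V := ⟨Sum.inl hM2.some⟩
    exact isRight_ne_empty
  have step2 : Deriv GSRule (N1.tensor (M2.par N2)) ((N1.tensor N2).par M2) := by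
    by_cases hN1 : Nonempty N1.V
    · refine deriv_of_rule (GSRule.ss M2 (N1.tensor N2) {z | z.isLeft} hM2 ?_)
        ⟨shuffle4 N1 M2 N2⟩ (iso_refl _)
      exact isLeft_ne_empty
    · have h1 : IsEmpty N1.V := not_nonempty_iff.mp hN1
      refine Deriv.of_iso ?_
      have l1 : iso (N1.tensor (M2.par N2)) (M2.par N2) :=
        iso.trans ⟨tensorComm _ _⟩ ⟨tensorEmpty _ _ h1⟩
      have l2 : iso ((N1.tensor N2).par M2) (M2.par N2) := by
        refine iso.trans (iso_par (iso.trans ⟨tensorComm _ _⟩ ⟨tensorEmpty _ _ h1⟩)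
          (iso_refl _)) ?_
        exact ⟨parComm _ _⟩
      exact l1.trans l2.symm
  refine step1.trans ?_
  have flip : Deriv GSRule (M1.par (N1.tensor (M2.par N2))) (M1.par ((N1.tensor N2).par M2)) :=
    Deriv.par_right M1 step2
  refine (Deriv.of_iso ⟨parComm _ _⟩).trans (flip.trans (Deriv.of_iso ?_))
  refine iso.trans (iso_par (iso_refl M1) ⟨parComm _ _⟩) ?_
  exact iso.symm ⟨parAssoc _ _ _⟩
end TwoBlock



----------------------------------------------------------------
-- Composition isomorphisms for the modular decomposition
----------------------------------------------------------------

section CompIso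

open LGraph Classical

lemma isModule_dual {G : LGraph} {W : Set G.V} (hW : G.IsModule W) :
    G.dual.IsModule W := by
  intro v hv x hx y hy
  have hvx : v ≠ x := fun h => hv (h ▸ hx)
  have hvy : v ≠ y := fun h => hv (h ▸ hy)
  show (v ≠ x ∧ ¬ G.adj v x) ↔ (v ≠ y ∧ ¬ G.adj v y)
  rw [iff_true_intro hvx, iff_true_intro hvy, true_and, true_and, not_iff_not]
  exact hW v hv x hx y hy

lemma prime_dual {G : LGraph} (hP : G.Prime) : G.dual.Prime := by
  refine ⟨hP.1, fun W hW => hP.2 W ?_⟩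
  intro v hv x hx y hy
  have hvx : v ≠ x := fun h => hv (h ▸ hx)
  have hvy : v ≠ y := fun h => hv (h ▸ hy)
  have := hW v hv x hx y hy
  show G.adj v x ↔ G.adj v y
  rw [show (G.dual.adj v x ↔ G.dual.adj v y) ↔ _ from Iff.rfl] at this
  constructor
  · intro h
    by_contra h'
    exact ((this.mpr ⟨hvy, h'⟩).2 h)
  · intro h
    by_contra h'
    exact ((this.mp ⟨hvx, h'⟩).2 h)

variable (G : LGraph) (W : Set G.V)

/-- drop a vertex whose module is empty -/
noncomputable def compDropEmpty (M : G.V → LGraph) (v₀ : G.V) (h : IsEmpty (M v₀).V) :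
    Iso ((induce G (fun v => v ≠ v₀)).comp (fun w => M w.val)) (G.comp M) where
  toEquiv :=
    { toFun := fun x => ⟨x.1.val, x.2⟩
      invFun := fun x => ⟨⟨x.1, fun hv => (h.false (hv ▸ x.2)).elim⟩, x.2⟩
      left_inv := by rintro ⟨⟨v, hv⟩, m⟩; rfl
      right_inv := by rintro ⟨v, m⟩; rfl }
  adj_iff := by
    rintro ⟨w, m⟩ ⟨w', m'⟩
    show compAdj _ _ _ _ ↔ compAdj G M ⟨w.val, m⟩ ⟨w'.val, m'⟩
    by_cases hww : w = w'
    · subst hww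
      rw [compAdj_mk_same, compAdj_mk_same]
    · have : w.val ≠ w'.val := fun hh => hww (Subtype.ext hh)
      rw [compAdj_mk_ne hww, compAdj_mk_ne this]
  label_eq := by rintro ⟨w, m⟩; rfl

variable (hW : G.IsModule W) (x₀ : G.V) (hx₀ : x₀ ∈ W)

/-- recomposing a graph from the quotient by a module and the module itself -/
noncomputable def compModule (M : G.V → LGraph) (a : Atom) :
    Iso (((induce G (fun v => v ∉ W)).plug
          {c | G.adj c.val x₀} (single a)).comp
        (Sum.elim (fun c => M c.val)
          (fun _ => (induce G (fun v => v ∈ W)).comp (fun x => M x.val))))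
      (G.comp M) where
  toEquiv :=
    { toFun := fun x => match x with
        | ⟨.inl c, m⟩ => ⟨c.val, m⟩
        | ⟨.inr _, ⟨x, m⟩⟩ => ⟨x.val, m⟩
      invFun := fun p =>
        if h : p.1 ∈ W then ⟨.inr (), ⟨⟨p.1, h⟩, p.2⟩⟩ else ⟨.inl ⟨p.1, h⟩, p.2⟩
      left_inv := by
        rintro ⟨(c | u), m⟩
        · show (if h : (c.val ∈ W) then _ else _ : Σ z, _) = _
          rw [dif_neg c.2]
        · obtain ⟨x, m⟩ := m
          show (if h : (x.val ∈ W) then _ else _ : Σ z, _) = _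
          rw [dif_pos x.2]
          rfl
      right_inv := by
        rintro ⟨v, m⟩
        by_cases h : v ∈ W
        · simp only [dif_pos h]
        · simp only [dif_neg h] }
  adj_iff := by
    rintro ⟨(c | u), m⟩ ⟨(c' | u'), m'⟩
    · show compAdj _ _ _ _ ↔ compAdj G M ⟨c.val, m⟩ ⟨c'.val, m'⟩
      by_cases hcc : c = c'
      · subst hcc
        erw [compAdj_mk_same, compAdj_mk_same]
        exact Iff.rfl
      · have hne : c.val ≠ c'.val := fun hh => hcc (Subtype.ext hh)
        erw [compAdj_mk_ne (fun h => hcc (Sum.inl.inj h)), compAdj_mk_ne hne]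
        exact Iff.rfl
    · obtain ⟨x, m'⟩ := m'
      show compAdj _ _ _ _ ↔ compAdj G M ⟨c.val, m⟩ ⟨x.val, m'⟩
      have hb : (Sum.inl c) ≠ (Sum.inr u') := fun h => by cases h
      have hne : c.val ≠ x.val := fun hh => c.2 (hh ▸ x.2)
      erw [compAdj_mk_ne hb, compAdj_mk_ne hne]
      show G.adj c.val x₀ ↔ _
      exact (hW c.val c.2 x₀ hx₀ x.val x.2)
    · obtain ⟨x, m⟩ := m
      show compAdj _ _ _ _ ↔ compAdj G M ⟨x.val, m⟩ ⟨c'.val, m'⟩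
      have hb : (Sum.inr u) ≠ (Sum.inl c') := fun h => by cases h
      have hne : x.val ≠ c'.val := fun hh => c'.2 (hh ▸ x.2)
      erw [compAdj_mk_ne hb, compAdj_mk_ne hne]
      show G.adj c'.val x₀ ↔ _
      refine (hW c'.val c'.2 x₀ hx₀ x.val x.2).trans ⟨G.symm, G.symm⟩
    · obtain ⟨x, m⟩ := m
      obtain ⟨x', m'⟩ := m'
      obtain rfl : u = u' := rfl
      show compAdj ((G.induce fun v => v ∉ W).plug {c | G.adj c.val x₀} (single a))
          (Sum.elim (fun c => M c.val)
            (fun _ => (G.induce fun v => v ∈ W).comp fun x => M x.val))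
          ⟨Sum.inr u, ⟨x, m⟩⟩ ⟨Sum.inr u, ⟨x', m'⟩⟩ ↔
        compAdj G M ⟨x.val, m⟩ ⟨x'.val, m'⟩
      erw [compAdj_mk_same]
      show compAdj (G.induce fun v => v ∈ W) (fun x => M x.val) ⟨x, m⟩ ⟨x', m'⟩ ↔ _
      by_cases hxx : x = x'
      · subst hxx
        erw [compAdj_mk_same, compAdj_mk_same]
      · have hne : x.val ≠ x'.val := fun hh => hxx (Subtype.ext hh)
        erw [compAdj_mk_ne hxx, compAdj_mk_ne hne]
  label_eq := by
    rintro ⟨(c | u), m⟩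
    · rfl
    · obtain ⟨x, m⟩ := m; rfl

/-- composition distributes over a tensor base -/
noncomputable def compTensor (A B : LGraph) (H : (A.tensor B).V → LGraph) :
    Iso ((A.tensor B).comp H)
      ((A.comp (fun a => H (.inl a))).tensor (B.comp (fun b => H (.inr b)))) where
  toEquiv :=
    { toFun := fun x => match x with
        | ⟨.inl a, m⟩ => .inl ⟨a, m⟩
        | ⟨.inr b, m⟩ => .inr ⟨b, m⟩
      invFun := fun x => match x with
        | .inl y => ⟨.inl y.1, y.2⟩
        | .inr y => ⟨.inr y.1, y.2⟩
      left_inv := by rintro ⟨(a | b), m⟩ <;> rfl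
      right_inv := by rintro (y | y) <;> rfl }
  adj_iff := by
    rintro ⟨(a | b), m⟩ ⟨(a' | b'), m'⟩
    · show compAdj _ _ _ _ ↔ compAdj A (fun a => H (Sum.inl a)) ⟨a, m⟩ ⟨a', m'⟩
      by_cases haa : a = a'
      · subst haa
        rw [compAdj_mk_same, compAdj_mk_same]
      · rw [compAdj_mk_ne (fun h => haa (Sum.inl.inj h)), compAdj_mk_ne haa]
        exact Iff.rfl
    · show compAdj _ _ _ _ ↔ True
      rw [compAdj_mk_ne (fun h => by cases h)]
      show True ↔ True
      exact Iff.rfl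
    · show compAdj _ _ _ _ ↔ True
      rw [compAdj_mk_ne (fun h => by cases h)]
      show True ↔ True
      exact Iff.rfl
    · show compAdj _ _ _ _ ↔ compAdj B (fun b => H (Sum.inr b)) ⟨b, m⟩ ⟨b', m'⟩
      by_cases hbb : b = b'
      · subst hbb
        rw [compAdj_mk_same, compAdj_mk_same]
      · rw [compAdj_mk_ne (fun h => hbb (Sum.inr.inj h)), compAdj_mk_ne hbb]
        exact Iff.rfl
  label_eq := by rintro ⟨(a | b), m⟩ <;> rfl

/-- composition distributes over a par base -/
noncomputable def compPar (A B : LGraph) (H : (A.par B).V → LGraph) :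
    Iso ((A.par B).comp H)
      ((A.comp (fun a => H (.inl a))).par (B.comp (fun b => H (.inr b)))) where
  toEquiv :=
    { toFun := fun x => match x with
        | ⟨.inl a, m⟩ => .inl ⟨a, m⟩
        | ⟨.inr b, m⟩ => .inr ⟨b, m⟩
      invFun := fun x => match x with
        | .inl y => ⟨.inl y.1, y.2⟩
        | .inr y => ⟨.inr y.1, y.2⟩
      left_inv := by rintro ⟨(a | b), m⟩ <;> rfl
      right_inv := by rintro (y | y) <;> rfl }
  adj_iff := by
    rintro ⟨(a | b), m⟩ ⟨(a' | b'), m'⟩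
    · show compAdj _ _ _ _ ↔ compAdj A (fun a => H (Sum.inl a)) ⟨a, m⟩ ⟨a', m'⟩
      by_cases haa : a = a'
      · subst haa
        rw [compAdj_mk_same, compAdj_mk_same]
      · rw [compAdj_mk_ne (fun h => haa (Sum.inl.inj h)), compAdj_mk_ne haa]
        exact Iff.rfl
    · show compAdj _ _ _ _ ↔ False
      rw [compAdj_mk_ne (fun h => by cases h)]
      show False ↔ False
      exact Iff.rfl
    · show compAdj _ _ _ _ ↔ False
      rw [compAdj_mk_ne (fun h => by cases h)]
      show False ↔ False
      exact Iff.rfl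
    · show compAdj _ _ _ _ ↔ compAdj B (fun b => H (Sum.inr b)) ⟨b, m⟩ ⟨b', m'⟩
      by_cases hbb : b = b'
      · subst hbb
        rw [compAdj_mk_same, compAdj_mk_same]
      · rw [compAdj_mk_ne (fun h => hbb (Sum.inr.inj h)), compAdj_mk_ne hbb]
        exact Iff.rfl
  label_eq := by rintro ⟨(a | b), m⟩ <;> rfl

end CompIso



----------------------------------------------------------------
-- Two-vertex graphs
----------------------------------------------------------------

section TwoVertex

open LGraph

variable (K : LGraph) (u v : K.V) (huv : u ≠ v) (hall : ∀ w, w = u ∨ w = v)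
  (H : K.V → LGraph)

/-- the underlying equivalence -/
noncomputable def twoEquiv : (H u).V ⊕ (H v).V ≃ (Σ z : K.V, (H z).V) where
  toFun := Sum.elim (fun m => ⟨u, m⟩) (fun m => ⟨v, m⟩)
  invFun := fun x =>
    @dite _ (x.1 = u) (Classical.dec _) (fun h => Sum.inl (h ▸ x.2))
      (fun h => Sum.inr (((hall x.1).resolve_left h) ▸ x.2))
  left_inv := by
    rintro (m | m)
    · simp
    · simp only [Sum.elim_inr]
      exact dif_neg (Ne.symm huv)
  right_inv := by
    rintro ⟨z, m⟩
    rcases hall z with rfl | rfl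
    · simp
    · simp only []
      rw [dif_neg (Ne.symm huv)]
      rfl

noncomputable def compTwoTensor (hadj : K.adj u v) :
    Iso ((H u).tensor (H v)) (K.comp H) where
  toEquiv := twoEquiv K u v huv hall H
  adj_iff := by
    rintro (m | m) (m' | m')
    · show (H u).adj m m' ↔ compAdj K H ⟨u, m⟩ ⟨u, m'⟩
      rw [compAdj_mk_same]
    · show True ↔ compAdj K H ⟨u, m⟩ ⟨v, m'⟩
      rw [compAdj_mk_ne huv]
      simp [hadj]
    · show True ↔ compAdj K H ⟨v, m⟩ ⟨u, m'⟩
      rw [compAdj_mk_ne (Ne.symm huv)]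
      simp [K.symm hadj]
    · show (H v).adj m m' ↔ compAdj K H ⟨v, m⟩ ⟨v, m'⟩
      rw [compAdj_mk_same]
  label_eq := by rintro (m | m) <;> rfl

noncomputable def compTwoPar (hnadj : ¬ K.adj u v) :
    Iso ((H u).par (H v)) (K.comp H) where
  toEquiv := twoEquiv K u v huv hall H
  adj_iff := by
    rintro (m | m) (m' | m')
    · show (H u).adj m m' ↔ compAdj K H ⟨u, m⟩ ⟨u, m'⟩
      rw [compAdj_mk_same]
    · show False ↔ compAdj K H ⟨u, m⟩ ⟨v, m'⟩
      rw [compAdj_mk_ne huv]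
      simp [hnadj]
    · show False ↔ compAdj K H ⟨v, m⟩ ⟨u, m'⟩
      rw [compAdj_mk_ne (Ne.symm huv)]
      exact ⟨False.elim, fun h => hnadj (K.symm h)⟩
    · show (H v).adj m m' ↔ compAdj K H ⟨v, m⟩ ⟨v, m'⟩
      rw [compAdj_mk_same]
  label_eq := by rintro (m | m) <;> rfl

end TwoVertex

/-- the binary case of the main claim -/
lemma claim_two (G : LGraph) (u v : G.V) (huv : u ≠ v) (hall : ∀ w, w = u ∨ w = v)
    (M N : G.V → LGraph) (hMu : Nonempty (M u).V) (hMv : Nonempty (M v).V) :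
    Deriv GSRule (((M u).par (N u)).tensor (((M v).par (N v))))
      ((G.comp M).par (G.dual.comp N)) := by
  by_cases hadj : G.adj u v
  · have hnd : ¬ G.dual.adj u v := fun h => h.2 hadj
    refine (two_tensor hMu hMv).trans (Deriv.of_iso (iso_par ?_ ?_))
    · exact ⟨compTwoTensor G u v huv hall M hadj⟩
    · exact ⟨compTwoPar G.dual u v huv hall N hnd⟩
  · have hd : G.dual.adj u v := ⟨huv, hadj⟩
    refine (two_par hMu hMv).trans (Deriv.of_iso (iso_par ?_ ?_))
    · exact ⟨compTwoPar G u v huv hall M hadj⟩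
    · exact ⟨compTwoTensor G.dual u v huv hall N hd⟩

----------------------------------------------------------------
-- Every 3-vertex graph has a nontrivial module
----------------------------------------------------------------

lemma pair_module (G : LGraph) (u v w : G.V) (huv : u ≠ v) (hwu : w ≠ u) (hwv : w ≠ v)
    (hall : ∀ z, z = u ∨ z = v ∨ z = w) (hm : G.adj w u ↔ G.adj w v) :
    ∃ W : Set G.V, G.IsModule W ∧ W.Nonempty ∧ (¬ ∃ x, W = {x}) ∧ W ≠ Set.univ := by
  refine ⟨{u, v}, ?_, ⟨u, by simp⟩, ?_, ?_⟩
  · intro z hz x hx y hy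
    have hzw : z = w := by
      rcases hall z with rfl | rfl | rfl
      · exact absurd (by simp : z ∈ ({z, v} : Set G.V)) hz
      · exact absurd (by simp : z ∈ ({u, z} : Set G.V)) hz
      · rfl
    subst hzw
    have hx' : x = u ∨ x = v := hx
    have hy' : y = u ∨ y = v := hy
    rcases hx' with rfl | rfl <;> rcases hy' with rfl | rfl
    · exact Iff.rfl
    · exact hm
    · exact hm.symm
    · exact Iff.rfl
  · rintro ⟨x, hx⟩
    have h1 : u ∈ ({x} : Set G.V) := hx ▸ (by simp : u ∈ ({u, v} : Set G.V))
    have h2 : v ∈ ({x} : Set G.V) := hx ▸ (by simp : v ∈ ({u, v} : Set G.V))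
    exact huv ((Set.mem_singleton_iff.mp h1).trans (Set.mem_singleton_iff.mp h2).symm)
  · intro h
    have : w ∈ ({u, v} : Set G.V) := h ▸ Set.mem_univ w
    rcases this with rfl | hw
    · exact hwu rfl
    · exact hwv (Set.mem_singleton_iff.mp hw)

lemma exists_module_of_card_three (G : LGraph) (h3 : Fintype.card G.V = 3) :
    ∃ W : Set G.V, G.IsModule W ∧ W.Nonempty ∧ (¬ ∃ x, W = {x}) ∧ W ≠ Set.univ := by
  let e3 := Fintype.equivFinOfCardEq h3
  set u := e3.symm 0 with hu
  set v := e3.symm 1 with hv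
  set w := e3.symm 2 with hw
  have huv : u ≠ v := fun h => by simpa using e3.symm.injective h
  have huw : u ≠ w := fun h => by simpa using e3.symm.injective h
  have hvw : v ≠ w := fun h => by simpa using e3.symm.injective h
  have hfin : ∀ i : Fin 3, i = 0 ∨ i = 1 ∨ i = 2 := by decide
  have hall : ∀ z : G.V, z = u ∨ z = v ∨ z = w := by
    intro z
    rcases hfin (e3 z) with h | h | h
    · left; rw [← Equiv.symm_apply_apply e3 z, h]
    · right; left; rw [← Equiv.symm_apply_apply e3 z, h]
    · right; right; rw [← Equiv.symm_apply_apply e3 z, h]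
  by_cases hm1 : (G.adj w u ↔ G.adj w v)
  · exact pair_module G u v w huv (Ne.symm huw) (Ne.symm hvw) hall hm1
  by_cases hm2 : (G.adj v u ↔ G.adj v w)
  · exact pair_module G u w v huw (Ne.symm huv) hvw
      (fun z => by rcases hall z with h | h | h <;> tauto) hm2
  · have s1 : G.adj w u ↔ G.adj u w := ⟨G.symm, G.symm⟩
    have s2 : G.adj w v ↔ G.adj v w := ⟨G.symm, G.symm⟩
    have s3 : G.adj v u ↔ G.adj u v := ⟨G.symm, G.symm⟩
    have hm3 : (G.adj u v ↔ G.adj u w) := by tauto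
    exact pair_module G v w u hvw huv huw
      (fun z => by rcases hall z with h | h | h <;> tauto) hm3



----------------------------------------------------------------
-- Main claim
----------------------------------------------------------------

theorem mainClaim (n : ℕ) :
    ∀ (G : LGraph), Fintype.card G.V = n →
    ∀ (M N : G.V → LGraph), (∀ v, IsEmpty (M v).V → IsEmpty (N v).V) →
    ∀ T : LGraph, IsoCl.mk T = ∏ v, IsoCl.mk ((M v).par (N v)) →
    Deriv GSRule T ((G.comp M).par (G.dual.comp N)) := by
  induction n using Nat.strong_induction_on with
  | _ n IH =>
  intro G hcard M N hMN T hT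
  classical
  rcases Nat.eq_zero_or_pos n with rfl | hpos
  -- n = 0
  · haveI hGe : IsEmpty G.V := Fintype.card_eq_zero_iff.mp hcard
    have h1 : (∏ v : G.V, IsoCl.mk ((M v).par (N v))) = 1 := by
      rw [Finset.univ_eq_empty, Finset.prod_empty]
    rw [h1] at hT
    have e1 : IsEmpty (G.comp M).V := ⟨fun x => hGe.false x.1⟩
    have e2 : IsEmpty (G.dual.comp N).V := ⟨fun x => hGe.false x.1⟩
    refine Deriv.of_iso ((IsoCl.eq_iff.mp hT).trans (iso.symm (iso_empty ?_)))
    exact ⟨by rintro (x | x); exacts [e1.false x, e2.false x]⟩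
  by_cases hempty : ∃ v₀, IsEmpty (M v₀).V
  -- an empty module: drop the vertex
  · obtain ⟨v₀, hv₀⟩ := hempty
    have hN₀ : IsEmpty (N v₀).V := hMN v₀ hv₀
    have hcard' : Fintype.card (G.induce (fun v => v ≠ v₀)).V = n - 1 := by
      have h1 : Fintype.card {v : G.V // ¬ v = v₀} = n - 1 := by
        rw [Fintype.card_subtype_compl, Fintype.card_subtype_eq, hcard]
      rw [← h1]
    have hprodsplit : (∏ v : G.V, IsoCl.mk ((M v).par (N v))) =
        ∏ w : (G.induce (fun v => v ≠ v₀)).V, IsoCl.mk ((M w.val).par (N w.val)) := by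
      have h0 : IsoCl.mk ((M v₀).par (N v₀)) = 1 :=
        Quotient.sound (iso_empty ⟨by rintro (x | x); exacts [hv₀.false x, hN₀.false x]⟩)
      rw [← Finset.mul_prod_erase Finset.univ _ (Finset.mem_univ v₀), h0, one_mul]
      rw [Finset.prod_subtype (Finset.univ.erase v₀) (p := fun v => v ≠ v₀)
        (fun x => by simp) (fun v => IsoCl.mk ((M v).par (N v)))]
    have hd := IH (n - 1) (by omega) (G.induce (fun v => v ≠ v₀)) hcard'
      (fun w => M w.val) (fun w => N w.val) (fun w h => hMN w.val h) T
      (hT.trans hprodsplit)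
    refine hd.trans (Deriv.of_iso (iso_par ⟨compDropEmpty G M v₀ hv₀⟩ ?_))
    have i1 : iso ((G.induce (fun v => v ≠ v₀)).dual.comp (fun w => N w.val))
        ((G.dual.induce (fun v => v ≠ v₀)).comp (fun w => N w.val)) :=
      iso_comp (dualInduce G (fun v => v ≠ v₀)) (fun w => iso_refl _)
    exact i1.trans ⟨compDropEmpty G.dual N v₀ hN₀⟩
  have hMne : ∀ v, Nonempty (M v).V := fun v =>
    not_isEmpty_iff.mp (fun h => hempty ⟨v, h⟩)
  by_cases hone : n = 1
  -- n = 1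
  · subst hone
    obtain ⟨v₀, hall⟩ := Fintype.card_eq_one_iff.mp hcard
    haveI : Unique G.V := ⟨⟨v₀⟩, hall⟩
    have hprod : (∏ v : G.V, IsoCl.mk ((M v).par (N v))) =
        IsoCl.mk ((M v₀).par (N v₀)) :=
      Finset.prod_eq_single v₀ (fun x _ hx => absurd (hall x) hx)
        (fun h => absurd (Finset.mem_univ v₀) h)
    rw [hprod] at hT
    refine Deriv.of_iso ((IsoCl.eq_iff.mp hT).trans (iso.symm ?_))
    exact iso_par ⟨compUnique G M v₀ hall⟩ ⟨compUnique G.dual N v₀ hall⟩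
  by_cases hmod : ∃ W : Set G.V, G.IsModule W ∧ W.Nonempty ∧ (¬ ∃ x, W = {x}) ∧ W ≠ Set.univ
  -- a nontrivial module
  · obtain ⟨W, hWmod, hWne, hWnsing, hWnuniv⟩ := hmod
    obtain ⟨x₀, hx₀⟩ := hWne
    obtain ⟨z₀, hz₀⟩ := (Set.ne_univ_iff_exists_notMem W).mp hWnuniv
    have hW2 : ∃ y₀ ∈ W, y₀ ≠ x₀ := by
      by_contra hcon
      push_neg at hcon
      exact hWnsing ⟨x₀, Set.eq_singleton_iff_unique_mem.mpr ⟨hx₀, hcon⟩⟩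
    obtain ⟨y₀, hy₀, hyx⟩ := hW2
    -- abbreviations
    set X := G.induce (fun v => v ∈ W) with hX
    set C := G.induce (fun v => v ∉ W) with hC
    set Qg := C.plug {c | G.adj c.val x₀} (single ((0, true) : Atom)) with hQg
    set Mq : Qg.V → LGraph :=
      Sum.elim (fun c => M c.val) (fun _ => X.comp (fun x => M x.val)) with hMqdef
    set Nq : Qg.V → LGraph :=
      Sum.elim (fun c => N c.val) (fun _ => X.dual.comp (fun x => N x.val)) with hNqdef
    -- cardinalities
    have hsumcard : Fintype.card X.V + Fintype.card C.V = n := by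
      rw [← Fintype.card_sum, ← hcard]
      exact Fintype.card_congr (Equiv.sumCompl (fun v => v ∈ W))
    have hcXlt : Fintype.card X.V < n := by
      rw [← hcard]
      exact Fintype.card_subtype_lt (p := fun v => v ∈ W) hz₀
    have hcX2 : 2 ≤ Fintype.card X.V := by
      have : Nontrivial X.V :=
        ⟨⟨⟨x₀, hx₀⟩, ⟨y₀, hy₀⟩, fun h => hyx (congrArg Subtype.val h).symm⟩⟩
      exact Fintype.one_lt_card
    have hcQ : Fintype.card Qg.V = Fintype.card C.V + 1 := by
      show Fintype.card (C.V ⊕ Unit) = _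
      simp
    have hcQlt : Fintype.card C.V + 1 < n := by omega
    -- enumerations of the parts
    set eX := Fintype.equivFin X.V
    set eC := Fintype.equivFin C.V
    set TX := bigTensor _ (fun i => ((M (eX.symm i).val).par (N (eX.symm i).val))) with hTXdef
    set TC := bigTensor _ (fun i => ((M (eC.symm i).val).par (N (eC.symm i).val))) with hTCdef
    have hTXc : IsoCl.mk TX = ∏ x : X.V, IsoCl.mk ((M x.val).par (N x.val)) := by
      rw [hTXdef, IsoCl.mk_bigTensor]
      exact (Fintype.prod_equiv eX _ _ (fun x => by simp)).symm
    have hTCc : IsoCl.mk TC = ∏ c : C.V, IsoCl.mk ((M c.val).par (N c.val)) := by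
      rw [hTCdef, IsoCl.mk_bigTensor]
      exact (Fintype.prod_equiv eC _ _ (fun c => by simp)).symm
    -- the derivation on the module X
    have DX : Deriv GSRule TX
        ((X.comp fun x => M x.val).par (X.dual.comp fun x => N x.val)) :=
      IH (Fintype.card X.V) hcXlt X rfl (fun x => M x.val) (fun x => N x.val)
        (fun x h => hMN x.val h) TX hTXc
    set PX := ((X.comp fun x => M x.val).par (X.dual.comp fun x => N x.val)) with hPXdef
    -- split T
    have hTsplit : IsoCl.mk T = IsoCl.mk (TC.tensor TX) := by
      rw [hT, IsoCl.mk_tensor, hTXc, hTCc]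
      have hsplit : (∏ v : G.V, IsoCl.mk ((M v).par (N v))) =
          (∏ x : X.V, IsoCl.mk ((M x.val).par (N x.val))) *
            ∏ c : C.V, IsoCl.mk ((M c.val).par (N c.val)) := by
        calc (∏ v : G.V, IsoCl.mk ((M v).par (N v)))
            = ∏ z : X.V ⊕ C.V, IsoCl.mk
                ((M (Equiv.sumCompl (fun v => v ∈ W) z)).par
                  (N (Equiv.sumCompl (fun v => v ∈ W) z))) :=
              (Fintype.prod_equiv (Equiv.sumCompl (fun v => v ∈ W)) _ _ (fun z => rfl)).symm
          _ = _ := by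
              rw [Fintype.prod_sum_type]
              congr 1 <;> exact Finset.prod_congr rfl (fun z _ => by simp)
      rw [hsplit, mul_comm]
    -- derivation on the quotient
    have DQ : Deriv GSRule (TC.tensor PX) ((Qg.comp Mq).par (Qg.dual.comp Nq)) := by
      refine IH (Fintype.card C.V + 1) hcQlt Qg hcQ Mq Nq ?_ (TC.tensor PX) ?_
      · rintro (c | u) h
        · exact ((h.false (hMne c.val).some)).elim
        · exact ((h.false ⟨⟨x₀, hx₀⟩, (hMne x₀).some⟩)).elim
      · haveI : Unique (single ((0,true) : Atom)).V := ⟨⟨()⟩, fun _ => rfl⟩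
        rw [IsoCl.mk_tensor, hTCc]
        have : (∏ z : Qg.V, IsoCl.mk ((Mq z).par (Nq z))) =
            (∏ c : C.V, IsoCl.mk ((Mq (Sum.inl c)).par (Nq (Sum.inl c)))) *
              ∏ u : (single ((0, true) : Atom)).V,
                IsoCl.mk ((Mq (Sum.inr u)).par (Nq (Sum.inr u))) :=
          Fintype.prod_sum_type _
        rw [this]
        congr 1
        exact (Fintype.prod_unique (fun u : (single ((0,true) : Atom)).V =>
          IsoCl.mk ((Mq (Sum.inr u)).par (Nq (Sum.inr u))))).symm
    -- final isomorphism
    have D4 : iso ((Qg.comp Mq).par (Qg.dual.comp Nq))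
        ((G.comp M).par (G.dual.comp N)) := by
      refine iso_par ⟨compModule G W hWmod x₀ hx₀ M (0, true)⟩ ?_
      have hRiff : ∀ c : (C.dual).V,
          c ∈ ({c : C.V | G.adj c.val x₀}ᶜ) ↔
            (dualInduce G (fun v => v ∉ W)).toEquiv c ∈
              {c : (G.dual.induce (fun v => v ∉ W)).V | G.dual.adj c.val x₀} := by
        intro c
        constructor
        · intro hc
          exact ⟨fun h => c.2 (h ▸ hx₀), hc⟩
        · intro hc
          exact hc.2
      refine iso.trans (iso_comp
        (H' := Sum.elim (fun c => N c.val)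
          (fun _ => (G.dual.induce (fun v => v ∈ W)).comp (fun x => N x.val)))
        (Iso.trans (dualPlug C (single ((0, true) : Atom)) {c | G.adj c.val x₀})
          (plugCongr (dualInduce G (fun v => v ∉ W)) (dualSingle ((0, true) : Atom)) hRiff))
        (fun z => ?_)) ?_
      · rcases z with c | u
        · exact iso_refl (N c.val)
        · exact iso_comp (H' := fun x : (G.dual.induce (fun v => v ∈ W)).V => N x.val)
            (dualInduce G (fun v => v ∈ W)) (fun x => iso_refl (N x.val))
      · exact ⟨compModule G.dual W (isModule_dual hWmod) x₀ hx₀ N (dualAtom (0, true))⟩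
    exact (Deriv.of_iso (IsoCl.eq_iff.mp hTsplit)).trans
      ((Deriv.tensor_right TC DX).trans (DQ.trans (Deriv.of_iso D4)))
  -- no nontrivial module: G is "prime-like"
  · have hprime : ∀ Wm : Set G.V, G.IsModule Wm →
        Wm = ∅ ∨ (∃ x, Wm = {x}) ∨ Wm = Set.univ := by
      intro Wm hWm
      by_contra hcon
      push_neg at hcon
      exact hmod ⟨Wm, hWm, hcon.1, fun hex => hex.elim (fun x hx => hcon.2.1 x hx), hcon.2.2⟩
    by_cases htwo : n = 2
    · subst htwo
      have e2 := Fintype.equivFinOfCardEq hcard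
      set u := e2.symm 0 with hu
      set v := e2.symm 1 with hv
      have huv : u ≠ v := fun h => by simpa using e2.symm.injective h
      have hfin : ∀ i : Fin 2, i = 0 ∨ i = 1 := by decide
      have hall : ∀ w : G.V, w = u ∨ w = v := by
        intro w
        rcases hfin (e2 w) with h | h
        · left; rw [← Equiv.symm_apply_apply e2 w, h]
        · right; rw [← Equiv.symm_apply_apply e2 w, h]
      have huniv : (Finset.univ : Finset G.V) = {u, v} := by
        ext w
        simpa using hall w
      rw [huniv, Finset.prod_pair huv] at hT
      refine (Deriv.of_iso (IsoCl.eq_iff.mp (hT.trans (IsoCl.mk_tensor _ _).symm))).trans ?_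
      exact claim_two G u v huv hall M N (hMne u) (hMne v)
    by_cases hthree : n = 3
    · exact absurd (exists_module_of_card_three G (hcard.trans (by omega))) hmod
    · have h4 : 4 ≤ n := by omega
      have hPrime : G.Prime := ⟨by rw [hcard]; omega, hprime⟩
      have hPd : G.dual.Prime := prime_dual hPrime
      set e₀ : G.V ≃ Fin n := Fintype.equivFinOfCardEq hcard with he₀
      refine deriv_of_rule (GSRule.p n G.dual e₀ (fun i => M (e₀.symm i))
        (fun i => N (e₀.symm i)) hPd h4 (fun i => hMne _)) ?_ ?_
      · apply IsoCl.eq_iff.mp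
        rw [hT, IsoCl.mk_bigTensor]
        exact Fintype.prod_equiv e₀ _ _ (fun v => by simp)
      · refine iso_par ?_ ?_
        · refine iso_comp (dualDual G).symm (fun v => ?_)
          show iso (M v) (M (e₀.symm (e₀ v)))
          rw [Equiv.symm_apply_apply]
          exact iso_refl _
        · refine iso_comp_family (fun v => ?_)
          show iso (N v) (N (e₀.symm (e₀ v)))
          rw [Equiv.symm_apply_apply]
          exact iso_refl _




/-- Let `G` be a graph with vertices `v₁, …, vₙ` and let
`M₁, …, Mₙ, N₁, …, Nₙ` be graphs such that `Mᵢ = ∅` implies `Nᵢ = ∅` for every `i`.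
Then there is a GS derivation from `(M₁ ⅋ N₁) ⊗ ⋯ ⊗ (Mₙ ⅋ Nₙ)` to
`G⟨M₁, …, Mₙ⟩ ⅋ Ḡ⟨N₁, …, Nₙ⟩`, and dually a derivation using only `ai↑`, `ss↑`, `p↑`
from `G⟨M₁, …, Mₙ⟩ ⊗ Ḡ⟨N₁, …, Nₙ⟩` to `(M₁ ⊗ N₁) ⅋ ⋯ ⅋ (Mₙ ⊗ Nₙ)`. -/
theorem lemma_g (n : ℕ) (G : LGraph) (e : G.V ≃ Fin n) (M N : Fin n → LGraph)
    (h : ∀ i, IsEmpty (M i).V → IsEmpty (N i).V) :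
    Deriv GSRule (bigTensor n fun i => (M i).par (N i))
      ((G.comp fun v => M (e v)).par (G.dual.comp fun v => N (e v))) ∧
    Deriv UpRule ((G.comp fun v => M (e v)).tensor (G.dual.comp fun v => N (e v)))
      (bigPar n fun i => (M i).tensor (N i)) := by
  have hcard : Fintype.card G.V = n := by
    rw [← Fintype.card_fin n]
    exact Fintype.card_congr e
  constructor
  · refine mainClaim n G hcard (fun v => M (e v)) (fun v => N (e v)) (fun v => h (e v)) _ ?_
    rw [IsoCl.mk_bigTensor]
    exact (Fintype.prod_equiv e _ _ (fun v => rfl)).symm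
  · have D := mainClaim n G.dual hcard (fun v => (M (e v)).dual) (fun v => (N (e v)).dual)
      (fun v hv => h (e v) hv)
      (bigTensor n (fun i => (M i).dual.par ((N i).dual)))
      (by rw [IsoCl.mk_bigTensor]; exact (Fintype.prod_equiv e _ _ (fun v => rfl)).symm)
    have D2 := deriv_dual D
    refine (Deriv.of_iso ?_).trans (D2.trans (Deriv.of_iso ?_))
    · refine iso.symm ?_
      refine iso.trans ⟨dualPar _ _⟩ (iso_tensor ?_ ?_)
      · refine iso.trans ⟨dualComp _ _⟩ ?_
        exact iso_comp (dualDual G) (fun v => ⟨dualDual _⟩)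
      · refine iso.trans ⟨dualComp _ _⟩ ?_
        exact iso_comp (dualDual G.dual) (fun v => ⟨dualDual _⟩)
    · refine iso.trans (dual_bigTensor _ _) (iso_bigPar (fun i => ?_))
      exact iso.trans ⟨dualPar _ _⟩ (iso_tensor ⟨dualDual _⟩ ⟨dualDual _⟩)

end GSP
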